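/- Let j : ℝᴺ → [0,∞] be measurable and even with ∫ min{1,|z|²} j(z) dz < ∞. For t > 0 and u ∈ 𝒟ʲ(ℝᴺ), let Ω_{u,t} = {x : |u(x)| > t} and let P_t u be the pointwise truncation of u at level t. Then ‖u − P_t u‖²_{L²(ℝᴺ)} · inf_{x ∈ Ω_{u,t}} κ_{Ω_{u,t}}(x) ≤ ‖u‖², where κ_Ω(x) = ∫_{ℝᴺ∖Ω} j(x−y) dy and ‖u‖² = ℰ_j(u,u) + ‖u‖²_{L²}. -/

import Mathlib

open MeasureTheory ENNReal Filter Topology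

noncomputable section

/-- N-dimensional Euclidean space. -/
abbrev Euc (N : ℕ) := EuclideanSpace ℝ (Fin N)

/-- The nonlocal quadratic form ℰ_j(u,u) = (1/2)∬ (u(x)-u(y))² j(x-y) dx dy. -/
def Ej {N : ℕ} (j : Euc N → ℝ≥0∞) (u : Euc N → ℝ) : ℝ≥0∞ :=
  (1/2 : ℝ≥0∞) * ∫⁻ p : Euc N × Euc N,
    ENNReal.ofReal ((u p.1 - u p.2)^2) * j (p.1 - p.2) ∂(volume.prod volume)

/-- The squared L² norm of u. -/
def l2sq {N : ℕ} (u : Euc N → ℝ) : ℝ≥0∞ := ∫⁻ x, ENNReal.ofReal ((u x)^2)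

/-- The squared norm of 𝒟ʲ(ℝᴺ): ‖u‖² = ℰ_j(u,u) + ‖u‖²_{L²}. -/
def DnormSq {N : ℕ} (j : Euc N → ℝ≥0∞) (u : Euc N → ℝ) : ℝ≥0∞ := Ej j u + l2sq u

/-- Membership in 𝒟ʲ(ℝᴺ) = {u ∈ L² : ℰ_j(u,u) < ∞}. -/
def MemDj {N : ℕ} (j : Euc N → ℝ≥0∞) (u : Euc N → ℝ) : Prop :=
  MemLp u 2 (volume : Measure (Euc N)) ∧ Ej j u < ⊤

/-- Condition (A1): 0 < ∫ min{1,|z|²} j(z) dz < ∞ (evenness stated separately). -/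
def CondA1 {N : ℕ} (j : Euc N → ℝ≥0∞) : Prop :=
  0 < ∫⁻ z, ENNReal.ofReal (min 1 (‖z‖^2)) * j z ∧
    (∫⁻ z, ENNReal.ofReal (min 1 (‖z‖^2)) * j z) < ⊤

/-- The killing measure κ_Ω(x) = ∫_{ℝᴺ∖Ω} j(x−y) dy. -/
def kappaSet {N : ℕ} (j : Euc N → ℝ≥0∞) (Ω : Set (Euc N)) (x : Euc N) : ℝ≥0∞ :=
  ∫⁻ y in Ωᶜ, j (x - y)

/-- The truncation P_t u at level t. -/
def trunc {N : ℕ} (t : ℝ) (u : Euc N → ℝ) : Euc N → ℝ :=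
  fun x => max (-t) (min t (u x))


private lemma trunc_eq_self_aux {t a : ℝ} (ha : |a| ≤ t) : max (-t) (min t a) = a := by
  obtain ⟨h1, h2⟩ := abs_le.mp ha
  rw [min_eq_right h2, max_eq_right h1]

private lemma key_sq_aux {t a b : ℝ} (ht : 0 < t) (ha : t < |a|) (hb : |b| ≤ t) :
    (a - max (-t) (min t a))^2 ≤ (a - b)^2 := by
  obtain ⟨hb1, hb2⟩ := abs_le.mp hb
  rcases lt_abs.mp ha with h | h
  · rw [min_eq_left h.le, max_eq_right (by linarith)]
    nlinarith [mul_nonneg (by linarith : (0:ℝ) ≤ t - b) (by linarith : (0:ℝ) ≤ 2*a - t - b)]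
  · rw [min_eq_right (by linarith), max_eq_left (by linarith)]
    nlinarith [mul_nonneg (by linarith : (0:ℝ) ≤ b + t) (by linarith : (0:ℝ) ≤ b - t - 2*a)]

private lemma aemeasurable_indicator_aux {α : Type*} [MeasurableSpace α] {μ : MeasureTheory.Measure α}
    {s : Set α} {f : α → ℝ≥0∞} (hf : AEMeasurable f μ) (hs : MeasureTheory.NullMeasurableSet s μ) :
    AEMeasurable (s.indicator f) μ := by
  obtain ⟨f', hf'm, hff'⟩ := hf
  refine ⟨(MeasureTheory.toMeasurable μ s).indicator f',
    hf'm.indicator (measurableSet_toMeasurable μ s), ?_⟩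
  have h1 : s.indicator f =ᵐ[μ] (MeasureTheory.toMeasurable μ s).indicator f :=
    indicator_ae_eq_of_ae_eq_set hs.toMeasurable_ae_eq.symm
  refine h1.trans ?_
  filter_upwards [hff'] with x hx
  by_cases hxs : x ∈ MeasureTheory.toMeasurable μ s
  · simp [Set.indicator_of_mem hxs, hx]
  · simp [Set.indicator_of_notMem hxs]

/-- ‖u − P_t u‖²_{L²} · inf_{x ∈ Ω_{u,t}} κ_{Ω_{u,t}}(x) ≤ ‖u‖². -/
theorem trunc_dist_killing_bound {N : ℕ} (j : Euc N → ℝ≥0∞) (hj : Measurable j)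
    (heven : ∀ z, j (-z) = j z)
    (hA1fin : (∫⁻ z, ENNReal.ofReal (min 1 (‖z‖^2)) * j z) ≠ ⊤)
    (t : ℝ) (ht : 0 < t) (u : Euc N → ℝ) (hu : MemDj j u) :
    (∫⁻ x, ENNReal.ofReal ((u x - trunc t u x)^2)) *
      (⨅ x ∈ {x : Euc N | t < |u x|}, kappaSet j {x : Euc N | t < |u x|} x)
      ≤ DnormSq j u := by
  classical
  set W : Set (Euc N) := {x : Euc N | t < |u x|} with hWdef
  set I : ℝ≥0∞ := ⨅ x ∈ W, kappaSet j W x with hIdef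
  have hu_ae : AEMeasurable u volume := hu.1.1.aemeasurable
  have hWnm : NullMeasurableSet W volume := by
    have hWpre : W = (fun x => |u x|) ⁻¹' Set.Ioi t := rfl
    rw [hWpre]
    exact (continuous_abs.measurable.comp_aemeasurable hu_ae).nullMeasurable measurableSet_Ioi
  set F : Euc N × Euc N → ℝ≥0∞ :=
    fun p => ENNReal.ofReal ((u p.1 - u p.2)^2) * j (p.1 - p.2) with hFdef
  have hjsub : Measurable (fun p : Euc N × Euc N => j (p.1 - p.2)) :=
    hj.comp (measurable_fst.sub measurable_snd)
  -- F is a.e. measurable on the product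
  have hF_ae : AEMeasurable F (volume.prod volume) := by
    obtain ⟨u', hu'm, huu'⟩ := hu_ae
    refine ⟨fun p => ENNReal.ofReal ((u' p.1 - u' p.2)^2) * j (p.1 - p.2), ?_, ?_⟩
    · exact (ENNReal.measurable_ofReal.comp
        (((hu'm.comp measurable_fst).sub (hu'm.comp measurable_snd)).pow_const 2)).mul hjsub
    · have hN : volume {x : Euc N | u x ≠ u' x} = 0 := by
        simpa [Filter.EventuallyEq, ae_iff] using huu'
      rw [Filter.EventuallyEq, ae_iff]
      refine measure_mono_null (fun p hp => ?_)
        (by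
          refine measure_union_null ?_ ?_ <;>
            rw [Measure.prod_prod] <;> simp [hN]
          : (volume.prod volume)
            (({x : Euc N | u x ≠ u' x} ×ˢ (Set.univ : Set (Euc N))) ∪
              ((Set.univ : Set (Euc N)) ×ˢ {x : Euc N | u x ≠ u' x})) = 0)
      by_contra hc
      simp only [Set.mem_union, Set.mem_prod, Set.mem_setOf_eq, Set.mem_univ, and_true,
        true_and, not_or, not_not] at hc
      exact hp (by simp [hFdef, hc.1, hc.2])
  -- pointwise estimate
  have step1 : ∀ x, ENNReal.ofReal ((u x - trunc t u x)^2) * I ≤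
      W.indicator (fun x => ∫⁻ y in Wᶜ, F (x, y)) x := by
    intro x
    by_cases hx : x ∈ W
    · rw [Set.indicator_of_mem hx]
      have hxW : t < |u x| := hx
      calc ENNReal.ofReal ((u x - trunc t u x)^2) * I
          ≤ ENNReal.ofReal ((u x - trunc t u x)^2) * kappaSet j W x :=
            mul_le_mul_right (biInf_le _ hx) _
        _ = ∫⁻ y in Wᶜ, ENNReal.ofReal ((u x - trunc t u x)^2) * j (x - y) :=
            (lintegral_const_mul _ (hj.comp (measurable_const.sub measurable_id))).symm
        _ ≤ ∫⁻ y in Wᶜ, F (x, y) := by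
            refine lintegral_mono_ae ?_
            filter_upwards [ae_restrict_mem₀ hWnm.compl] with y hy
            have hyW : |u y| ≤ t := not_lt.mp hy
            exact mul_le_mul_left (ENNReal.ofReal_le_ofReal
              (key_sq_aux ht hxW hyW)) _
    · rw [Set.indicator_of_notMem hx]
      have hx' : |u x| ≤ t := not_lt.mp hx
      have hzero : u x - trunc t u x = 0 := by
        simp [trunc, trunc_eq_self_aux hx']
      simp [hzero]
  -- a.e. measurability of the truncation-difference square
  have hv_ae : AEMeasurable (fun x => ENNReal.ofReal ((u x - trunc t u x)^2)) volume := by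
    have h1 : AEMeasurable (trunc t u) volume := by
      exact aemeasurable_const.max (aemeasurable_const.min hu_ae)
    exact (ENNReal.measurable_ofReal.comp_aemeasurable ((hu_ae.sub h1).pow_const 2))
  have hA : NullMeasurableSet (W ×ˢ Wᶜ) (volume.prod volume) := hWnm.prod hWnm.compl
  have hA' : NullMeasurableSet (Wᶜ ×ˢ W) (volume.prod volume) := hWnm.compl.prod hWnm
  -- main bound up to the product set integral
  have step2 : (∫⁻ x, ENNReal.ofReal ((u x - trunc t u x)^2)) * I
      ≤ ∫⁻ p in W ×ˢ Wᶜ, F p ∂(volume.prod volume) := by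
    rw [← lintegral_mul_const'' I hv_ae]
    calc ∫⁻ x, ENNReal.ofReal ((u x - trunc t u x)^2) * I
        ≤ ∫⁻ x, W.indicator (fun x => ∫⁻ y in Wᶜ, F (x, y)) x := lintegral_mono step1
      _ = ∫⁻ x in W, ∫⁻ y in Wᶜ, F (x, y) := lintegral_indicator₀ hWnm _
      _ = ∫⁻ p in W ×ˢ Wᶜ, F p ∂(volume.prod volume) := by
          rw [← Measure.prod_restrict]
          exact (lintegral_prod F (hF_ae.mono_measure
            (by rw [Measure.prod_restrict]; exact Measure.restrict_le_self))).symm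
  -- symmetry of F
  have hFsymm : ∀ p : Euc N × Euc N, F (Prod.swap p) = F p := by
    intro p
    simp only [hFdef, Prod.swap, Prod.fst, Prod.snd]
    rw [show (u p.2 - u p.1)^2 = (u p.1 - u p.2)^2 by ring,
      show p.2 - p.1 = -(p.1 - p.2) by abel, heven]
  -- swapping the product set
  have hswap : ∫⁻ p in W ×ˢ Wᶜ, F p ∂(volume.prod volume)
      = ∫⁻ p in Wᶜ ×ˢ W, F p ∂(volume.prod volume) := by
    rw [← lintegral_indicator₀ hA, ← lintegral_indicator₀ hA']
    have hmap : (volume.prod volume).map Prod.swap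
        = (volume.prod volume : Measure (Euc N × Euc N)) := Measure.prod_swap
    have hind : AEMeasurable ((W ×ˢ Wᶜ).indicator F)
        ((volume.prod volume : Measure (Euc N × Euc N)).map Prod.swap) := by
      rw [hmap]; exact aemeasurable_indicator_aux hF_ae hA
    calc ∫⁻ p, (W ×ˢ Wᶜ).indicator F p ∂(volume.prod volume)
        = ∫⁻ p, (W ×ˢ Wᶜ).indicator F p
            ∂((volume.prod volume : Measure (Euc N × Euc N)).map Prod.swap) := by rw [hmap]
      _ = ∫⁻ p, (W ×ˢ Wᶜ).indicator F (Prod.swap p) ∂(volume.prod volume) :=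
          lintegral_map' hind measurable_swap.aemeasurable
      _ = ∫⁻ p, (Wᶜ ×ˢ W).indicator F p ∂(volume.prod volume) := by
          refine lintegral_congr fun p => ?_
          by_cases hp : p ∈ Wᶜ ×ˢ W
          · have hps : Prod.swap p ∈ W ×ˢ Wᶜ := ⟨hp.2, hp.1⟩
            rw [Set.indicator_of_mem hps, Set.indicator_of_mem hp, hFsymm]
          · have hps : Prod.swap p ∉ W ×ˢ Wᶜ := fun h => hp ⟨h.2, h.1⟩
            rw [Set.indicator_of_notMem hps, Set.indicator_of_notMem hp]
  -- the two pieces sum to at most the full integral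
  have hsum : (∫⁻ p in W ×ˢ Wᶜ, F p ∂(volume.prod volume))
      + (∫⁻ p in Wᶜ ×ˢ W, F p ∂(volume.prod volume))
      ≤ ∫⁻ p, F p ∂(volume.prod volume) := by
    rw [← lintegral_indicator₀ hA, ← lintegral_indicator₀ hA',
      ← lintegral_add_left' (aemeasurable_indicator_aux hF_ae hA)]
    refine lintegral_mono fun p => ?_
    by_cases hp : p ∈ W ×ˢ Wᶜ
    · have hp' : p ∉ Wᶜ ×ˢ W := fun h => h.1 hp.1
      rw [Set.indicator_of_mem hp, Set.indicator_of_notMem hp', add_zero]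
    · rw [Set.indicator_of_notMem hp, zero_add]
      exact Set.indicator_le_self _ _ p
  -- conclude
  have htwo : (∫⁻ p in W ×ˢ Wᶜ, F p ∂(volume.prod volume)) ≤ Ej j u := by
    have h2 : 2 * (∫⁻ p in W ×ˢ Wᶜ, F p ∂(volume.prod volume))
        ≤ 2 * Ej j u := by
      rw [two_mul]
      nth_rewrite 2 [hswap]
      refine hsum.trans ?_
      rw [Ej, ← mul_assoc, show (2 : ℝ≥0∞) * (1/2) = 1 by
        rw [one_div, ENNReal.mul_inv_cancel two_ne_zero ENNReal.ofNat_ne_top], one_mul]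
    exact (ENNReal.mul_le_mul_iff_right two_ne_zero ENNReal.ofNat_ne_top).mp h2
  exact (step2.trans (htwo.trans (le_self_add : Ej j u ≤ DnormSq j u)))
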